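/- Let K ≥ 1, let X be a nonempty finite set (of first-stage designs), let U be a nonempty finite set (of scenarios), let A : X → U → Set (ℝ^K) assign to each design x and scenario ξ a nonempty finite set A x ξ of achievable objective vectors, and let Q : U → Set (ℝ^K) assign to each scenario a nonempty finite set Q ξ (the scenario's ideal Pareto front). Then the minimum over x ∈ X of the maximum over ξ ∈ U of I(ParetoSet (A x ξ), Q ξ) equals the minimum over x ∈ X and over families of functions s ξ : Q ξ → ℝ^K with s ξ q ∈ A x ξ for all ξ ∈ U and q ∈ Q ξ, of max over ξ ∈ U, q ∈ Q ξ, and i ∈ Fin K of (s ξ q i − q i). (This is the equivalence between the robust flex-hand problem and its reformulation as a single worst-case optimization problem.) -/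

import Mathlib

set_option maxHeartbeats 1000000


/-- The Pareto set of `S ⊆ ℝ^K`: points of `S` that are minimal under the
componentwise partial order (no other point of `S` strictly dominates them). -/
def ParetoSet {K : ℕ} (S : Set (Fin K → ℝ)) : Set (Fin K → ℝ) :=
  {p | p ∈ S ∧ ∀ q ∈ S, (∀ i, q i ≤ p i) → q = p}

/-- The additive binary `ε`-indicator `I(P,Q)`: the smallest `ε ∈ ℝ` such that
every `q ∈ Q` is weakly dominated within `ε` by some `p ∈ P`. -/
noncomputable def epsInd {K : ℕ} (P Q : Set (Fin K → ℝ)) : ℝ :=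
  sInf {ε : ℝ | ∀ q ∈ Q, ∃ p ∈ P, ∀ i, p i - q i ≤ ε}

lemma pareto_exists {K : ℕ} {S : Set (Fin K → ℝ)} (hS : S.Finite) {p : Fin K → ℝ}
    (hp : p ∈ S) : ∃ p' ∈ ParetoSet S, ∀ i, p' i ≤ p i := by
  classical
  set T := hS.toFinset.filter (fun q => q ≤ p) with hT
  have hpT : p ∈ T := by simp [hT, hS.mem_toFinset, hp]
  obtain ⟨q, hqT, hqmin⟩ := T.exists_minimal ⟨p, hpT⟩
  rw [hT, Finset.mem_filter, hS.mem_toFinset] at hqT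
  refine ⟨q, ⟨hqT.1, ?_⟩, fun i => hqT.2 i⟩
  intro r hr hrq
  have hrq' : r ≤ q := fun i => hrq i
  have hrT : r ∈ T := by
    rw [hT, Finset.mem_filter, hS.mem_toFinset]
    exact ⟨hr, le_trans hrq' hqT.2⟩
  by_contra hne
  exact hne (le_antisymm hrq' (hqmin hrT hrq'))

lemma epsInd_eq {K : ℕ} (hKne : (Finset.univ : Finset (Fin K)).Nonempty)
    (P Q : Finset (Fin K → ℝ)) (hP : P.Nonempty) (hQ : Q.Nonempty) :
    epsInd (P : Set (Fin K → ℝ)) (Q : Set (Fin K → ℝ)) =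
      Q.sup' hQ fun q => P.inf' hP fun p => Finset.univ.sup' hKne fun i => p i - q i := by
  have hls : IsLeast {ε : ℝ | ∀ q ∈ (↑Q : Set (Fin K → ℝ)), ∃ p ∈ (↑P : Set (Fin K → ℝ)),
      ∀ i, p i - q i ≤ ε}
      (Q.sup' hQ fun q => P.inf' hP fun p => Finset.univ.sup' hKne fun i => p i - q i) := by
    constructor
    · intro q hq
      have hq' : q ∈ Q := hq
      obtain ⟨p, hpP, hpeq⟩ :=
        Finset.exists_mem_eq_inf' hP (fun p => Finset.univ.sup' hKne fun i => p i - q i)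
      refine ⟨p, hpP, fun i => ?_⟩
      have h1 : p i - q i ≤ Finset.univ.sup' hKne fun j => p j - q j :=
        @Finset.le_sup' ℝ (Fin K) _ Finset.univ (fun j => p j - q j) i (Finset.mem_univ i)
      have h2 : (P.inf' hP fun p => Finset.univ.sup' hKne fun i => p i - q i) ≤
          Q.sup' hQ fun q => P.inf' hP fun p => Finset.univ.sup' hKne fun i => p i - q i :=
        @Finset.le_sup' ℝ (Fin K → ℝ) _ Q
          (fun q => P.inf' hP fun p => Finset.univ.sup' hKne fun i => p i - q i) q hq'
      rw [hpeq] at h2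
      exact le_trans h1 h2
    · intro ε hε
      apply Finset.sup'_le
      intro q hq
      obtain ⟨p, hpP, hple⟩ := hε q hq
      have h1 : (P.inf' hP fun p => Finset.univ.sup' hKne fun i => p i - q i) ≤
          Finset.univ.sup' hKne fun i => p i - q i :=
        @Finset.inf'_le ℝ (Fin K → ℝ) _ P
          (fun p => Finset.univ.sup' hKne fun i => p i - q i) p hpP
      exact le_trans h1 (Finset.sup'_le hKne _ fun i _ => hple i)
  exact hls.csInf_eq

lemma epsInd_pareto {K : ℕ} (S Q : Set (Fin K → ℝ)) (hS : S.Finite) :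
    epsInd (ParetoSet S) Q = epsInd S Q := by
  unfold epsInd
  congr 1
  ext ε
  constructor
  · intro h q hq
    obtain ⟨p, hp, h2⟩ := h q hq
    exact ⟨p, hp.1, h2⟩
  · intro h q hq
    obtain ⟨p, hp, h2⟩ := h q hq
    obtain ⟨p', hp', hle⟩ := pareto_exists hS hp
    exact ⟨p', hp', fun i => le_trans (by linarith [hle i]) (h2 i)⟩

/-- The robust flex-hand problem `min_{x} max_{ξ} I(ParetoSet (A x ξ), Q ξ)`
equals (indeed, is the minimum of) the reformulated worst-case optimization
problem, minimizing over `x` and over families `s` choosing one achievable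
point `s ξ q ∈ A x ξ` per scenario `ξ` and ideal Pareto point `q ∈ Q ξ`, the
value `max_{ξ} max_{q ∈ Q ξ} max_{i} (s ξ q i − q i)`. -/
theorem robust_flexHand_reformulation {K : ℕ} (hK : 1 ≤ K)
    (X U : Type*) [Fintype X] [Nonempty X] [Fintype U] [Nonempty U]
    (A : X → U → Set (Fin K → ℝ))
    (hAf : ∀ x ξ, (A x ξ).Finite) (hA : ∀ x ξ, (A x ξ).Nonempty)
    (Q : U → Set (Fin K → ℝ))
    (hQf : ∀ ξ, (Q ξ).Finite) (hQne : ∀ ξ, (Q ξ).Nonempty) :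
    IsLeast
      {ε : ℝ | ∃ x : X, ∃ s : U → (Fin K → ℝ) → (Fin K → ℝ),
        (∀ ξ, ∀ q ∈ Q ξ, s ξ q ∈ A x ξ) ∧
        ε = Finset.univ.sup' Finset.univ_nonempty fun ξ : U =>
              (hQf ξ).toFinset.sup' (by simpa using hQne ξ) fun q =>
                Finset.univ.sup' (Finset.univ_nonempty_iff.mpr ⟨⟨0, hK⟩⟩)
                  fun i : Fin K => s ξ q i - q i}
      (Finset.univ.inf' Finset.univ_nonempty fun x : X =>
        Finset.univ.sup' Finset.univ_nonempty fun ξ : U =>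
          epsInd (ParetoSet (A x ξ)) (Q ξ)) := by
  classical
  have hKne : (Finset.univ : Finset (Fin K)).Nonempty :=
    Finset.univ_nonempty_iff.mpr ⟨⟨0, hK⟩⟩
  have hA' : ∀ x ξ, ((hAf x ξ).toFinset).Nonempty := by
    intro x ξ; simpa [(hAf x ξ).mem_toFinset] using hA x ξ
  have hQ' : ∀ ξ, ((hQf ξ).toFinset).Nonempty := by
    intro ξ; simpa [(hQf ξ).mem_toFinset] using hQne ξ
  have key : ∀ x ξ, epsInd (ParetoSet (A x ξ)) (Q ξ) =
      (hQf ξ).toFinset.sup' (hQ' ξ) fun q =>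
        (hAf x ξ).toFinset.inf' (hA' x ξ) fun p =>
          Finset.univ.sup' hKne fun i => p i - q i := by
    intro x ξ
    rw [epsInd_pareto _ _ (hAf x ξ)]
    have := epsInd_eq hKne (hAf x ξ).toFinset (hQf ξ).toFinset (hA' x ξ) (hQ' ξ)
    rwa [(hAf x ξ).coe_toFinset, (hQf ξ).coe_toFinset] at this
  constructor
  · obtain ⟨x₀, _, hx₀⟩ := Finset.exists_mem_eq_inf'
      (Finset.univ_nonempty : (Finset.univ : Finset X).Nonempty)
      (fun x : X => Finset.univ.sup' Finset.univ_nonempty fun ξ : U =>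
        epsInd (ParetoSet (A x ξ)) (Q ξ))
    choose s hs1 hs2 using fun (ξ : U) (q : Fin K → ℝ) =>
      Finset.exists_mem_eq_inf' (hA' x₀ ξ)
        (fun p => Finset.univ.sup' hKne fun i => p i - q i)
    refine ⟨x₀, s, fun ξ q _ => (hAf x₀ ξ).mem_toFinset.mp (hs1 ξ q), ?_⟩
    rw [hx₀]
    refine Finset.sup'_congr _ rfl fun ξ _ => ?_
    rw [key x₀ ξ]
    exact Finset.sup'_congr _ rfl fun q _ => hs2 ξ q
  · rintro ε ⟨x, s, hs, rfl⟩
    refine le_trans (Finset.inf'_le _ (Finset.mem_univ x)) ?_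
    apply Finset.sup'_le
    intro ξ _
    refine le_trans ?_ (Finset.le_sup' _ (Finset.mem_univ ξ))
    rw [key x ξ]
    apply Finset.sup'_le
    intro q hq
    have hmem : s ξ q ∈ (hAf x ξ).toFinset :=
      (hAf x ξ).mem_toFinset.mpr (hs ξ q ((hQf ξ).mem_toFinset.mp hq))
    calc ((hAf x ξ).toFinset.inf' (hA' x ξ) fun p => Finset.univ.sup' hKne fun i => p i - q i)
        ≤ Finset.univ.sup' hKne fun i => s ξ q i - q i := Finset.inf'_le _ hmem
      _ ≤ _ := Finset.le_sup' (fun q => Finset.univ.sup' hKne fun i => s ξ q i - q i) hq
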